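/- (Closed form for the conditional Sibson mutual information.) Fix α > 1 and a prior probability measure w on Θ. The minimum over batch predictors p̂ of the conditional Rényi divergence D_α(Y‖Ŷ | θ, X^n) = (1/(α−1))·log( ∫_Θ Σ_{x^n} p_θ(x^n) Σ_y p_θ(y)(p_θ(y)/p̂(y|x^n))^{α−1} w(dθ) ) equals I_α^w(θ,Y|X^n) = (1/(α−1))·log Σ_{x^n} { Σ_y ( ∫_Θ p_θ(x^n) p_θ(y)^α w(dθ) )^{1/α} }^α, and the minimum is attained by the conditional α-NML predictor p̂_α(y|x^n) = ( ∫_Θ p_θ(y)^α w(dθ|x^n) )^{1/α} / Σ_{y'} ( ∫_Θ p_θ(y')^α w(dθ|x^n) )^{1/α}, where w(dθ|x^n) = w(dθ) p_θ(x^n)/∫_Θ p_{θ'}(x^n) w(dθ') is the posterior. -/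

import Mathlib

open MeasureTheory Real Filter

/-- `q` is a probability mass function on the finite type `B`. -/
def IsPMF {B : Type*} [Fintype B] (q : B → ℝ) : Prop :=
  (∀ y, 0 ≤ q y) ∧ ∑ y, q y = 1

/-- Probability of a tuple of `n` i.i.d. batches: `p_θ(x^n) = ∏ i, p_θ(x_i)`. -/
def prodP {Θ B : Type*} (p : Θ → B → ℝ) (n : ℕ) (θ : Θ) (x : Fin n → B) : ℝ :=
  ∏ i, p θ (x i)

/-- The batch `α`-regret
`R_α(p̂,θ) = (1/(α-1)) log ( Σ_{x^n} p_θ(x^n) Σ_y p_θ(y) (p_θ(y)/p̂(y|x^n))^(α-1) )`. -/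
noncomputable def alphaRegret {Θ B : Type*} [Fintype B] (α : ℝ) (p : Θ → B → ℝ) (n : ℕ)
    (phat : (Fin n → B) → B → ℝ) (θ : Θ) : ℝ :=
  (α - 1)⁻¹ * Real.log (∑ x : Fin n → B, prodP p n θ x *
    ∑ y : B, p θ y * (p θ y / phat x y) ^ (α - 1))

/-- The conditional Rényi divergence `D_α(Y ‖ Ŷ | θ, X^n)` under the joint law
`w(dθ) p_θ(x^n) p_θ(y)`. -/
noncomputable def condRenyiDiv {Θ B : Type*} [MeasurableSpace Θ] [Fintype B] (α : ℝ)
    (p : Θ → B → ℝ) (n : ℕ) (w : Measure Θ) (phat : (Fin n → B) → B → ℝ) : ℝ :=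
  (α - 1)⁻¹ * Real.log (∫ θ, (∑ x : Fin n → B, prodP p n θ x *
    ∑ y : B, p θ y * (p θ y / phat x y) ^ (α - 1)) ∂w)

/-- The conditional Sibson mutual information
`I_α^w(θ,Y|X^n) = (1/(α-1)) log Σ_{x^n} { Σ_y ( ∫ p_θ(x^n) p_θ(y)^α w(dθ) )^(1/α) }^α`. -/
noncomputable def sibsonMI {Θ B : Type*} [MeasurableSpace Θ] [Fintype B] (α : ℝ)
    (p : Θ → B → ℝ) (n : ℕ) (w : Measure Θ) : ℝ :=
  (α - 1)⁻¹ * Real.log (∑ x : Fin n → B,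
    (∑ y : B, (∫ θ, prodP p n θ x * p θ y ^ α ∂w) ^ α⁻¹) ^ α)

/-- Integral of `g` against the posterior `w(dθ|x^n) = w(dθ) p_θ(x^n) / ∫ p_θ'(x^n) w(dθ')`. -/
noncomputable def posteriorInt {Θ B : Type*} [MeasurableSpace Θ] (p : Θ → B → ℝ) (n : ℕ)
    (w : Measure Θ) (x : Fin n → B) (g : Θ → ℝ) : ℝ :=
  (∫ θ, prodP p n θ x * g θ ∂w) / (∫ θ, prodP p n θ x ∂w)

/-- The conditional `α`-NML predictor
`p̂_α(y|x^n) = ( ∫ p_θ(y)^α w(dθ|x^n) )^(1/α) / Σ_y' ( ∫ p_θ(y')^α w(dθ|x^n) )^(1/α)`. -/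
noncomputable def alphaNML {Θ B : Type*} [MeasurableSpace Θ] [Fintype B] (α : ℝ)
    (p : Θ → B → ℝ) (n : ℕ) (w : Measure Θ) (x : Fin n → B) (y : B) : ℝ :=
  (posteriorInt p n w x fun θ => p θ y ^ α) ^ α⁻¹ /
    ∑ y' : B, (posteriorInt p n w x fun θ => p θ y' ^ α) ^ α⁻¹

set_option linter.unusedSectionVars false in
/-- Pointwise identity `b (b/c)^(α-1) = b^α c^(1-α)` for nonnegative reals. -/
private lemma key_pt' {α : ℝ} (hα : 1 < α) {b c : ℝ} (hb : 0 ≤ b) (hc : 0 ≤ c) :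
    b * (b / c) ^ (α - 1) = b ^ α * c ^ (1 - α) := by
  have hα1 : α - 1 ≠ 0 := by linarith
  have h1α : (1 : ℝ) - α ≠ 0 := by linarith
  have hαne : α ≠ 0 := by linarith
  rcases hb.eq_or_lt with hb0 | hb0
  · rw [← hb0]
    simp [Real.zero_rpow hαne, Real.zero_rpow hα1]
  rcases hc.eq_or_lt with hc0 | hc0
  · rw [← hc0, div_zero, Real.zero_rpow hα1, Real.zero_rpow h1α, mul_zero, mul_zero]
  · have h1 : b ^ α = b * b ^ (α - 1) := by
      rw [show α = 1 + (α - 1) by ring, Real.rpow_add hb0, Real.rpow_one]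
      ring_nf
    have h2 : c ^ (1 - α) = (c ^ (α - 1))⁻¹ := by
      rw [show (1 : ℝ) - α = -(α - 1) by ring, Real.rpow_neg hc]
    rw [Real.div_rpow hb hc, h1, h2, div_eq_mul_inv]
    ring

/-- Hölder-type inequality: for a strictly positive pmf `q`,
`(∑ A^{1/α})^α ≤ ∑ A·q^{1-α}`. -/
private lemma holder_step {B : Type*} [Fintype B] {α : ℝ} (hα : 1 < α) (A q : B → ℝ)
    (hA : ∀ y, 0 ≤ A y) (hq : ∀ y, 0 < q y) (hqs : ∑ y, q y = 1) :
    (∑ y, A y ^ α⁻¹) ^ α ≤ ∑ y, A y * q y ^ (1 - α) := by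
  have hα0 : (0 : ℝ) < α := by linarith
  have hαne : α ≠ 0 := ne_of_gt hα0
  have hα1 : α - 1 ≠ 0 := by linarith
  have hconj : α.HolderConjugate (α / (α - 1)) := Real.HolderConjugate.conjExponent hα
  set f : B → ℝ := fun y => (A y * q y ^ (1 - α)) ^ α⁻¹ with hf
  set g : B → ℝ := fun y => q y ^ ((α - 1) / α) with hg
  have hfg : ∀ y, A y ^ α⁻¹ = f y * g y := by
    intro y
    have hq0 := (hq y).le
    rw [hf, hg]
    simp only
    rw [Real.mul_rpow (hA y) (Real.rpow_nonneg hq0 _), ← Real.rpow_mul hq0, mul_assoc,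
      ← Real.rpow_add (hq y), show (1 - α) * α⁻¹ + (α - 1) / α = 0 by
        rw [div_eq_mul_inv]; ring, Real.rpow_zero, mul_one]
  have hterm0 : ∀ y, 0 ≤ A y * q y ^ (1 - α) :=
    fun y => mul_nonneg (hA y) (Real.rpow_nonneg (hq y).le _)
  have hfα : ∀ y, f y ^ α = A y * q y ^ (1 - α) := fun y =>
    Real.rpow_inv_rpow (hterm0 y) hαne
  have hgα : ∀ y, g y ^ (α / (α - 1)) = q y := by
    intro y
    rw [hg]
    simp only
    rw [← Real.rpow_mul (hq y).le, show (α - 1) / α * (α / (α - 1)) = 1 by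
      field_simp, Real.rpow_one]
  have holder := Real.inner_le_Lp_mul_Lq_of_nonneg (s := Finset.univ) hconj
    (f := f) (g := g)
    (fun y _ => Real.rpow_nonneg (hterm0 y) _)
    (fun y _ => Real.rpow_nonneg (hq y).le _)
  rw [Finset.sum_congr rfl (fun y _ => hgα y), hqs, Real.one_rpow, mul_one,
    Finset.sum_congr rfl (fun y _ => hfα y)] at holder
  calc (∑ y, A y ^ α⁻¹) ^ α = (∑ y, f y * g y) ^ α := by
        rw [Finset.sum_congr rfl (fun y _ => hfg y)]
    _ ≤ ((∑ y, A y * q y ^ (1 - α)) ^ (1 / α)) ^ α := by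
        apply Real.rpow_le_rpow _ holder hα0.le
        exact Finset.sum_nonneg fun y _ =>
          mul_nonneg (Real.rpow_nonneg (hterm0 y) _) (Real.rpow_nonneg (hq y).le _)
    _ = ∑ y, A y * q y ^ (1 - α) := by
        rw [one_div, Real.rpow_inv_rpow (Finset.sum_nonneg fun y _ => hterm0 y) hαne]

/-- Identity describing the normalized `α`-NML ratio: the posterior normalization cancels. -/
private lemma ratio_eq {B : Type*} [Fintype B] {α : ℝ} (hα : 1 < α) (A : B → ℝ)
    (hA : ∀ y, 0 ≤ A y) (Z : ℝ) (hZ : 0 ≤ Z)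
    (hAZ : Z = 0 → ∀ y, A y = 0) (y : B) :
    (A y / Z) ^ α⁻¹ / (∑ y', (A y' / Z) ^ α⁻¹) = A y ^ α⁻¹ / ∑ y', A y' ^ α⁻¹ := by
  have hαne : α ≠ 0 := by linarith
  rcases hZ.eq_or_lt with hZ0 | hZpos
  · simp [hAZ hZ0.symm, Real.zero_rpow (inv_ne_zero hαne)]
  · have h1 : ∀ y' : B, (A y' / Z) ^ α⁻¹ = A y' ^ α⁻¹ / Z ^ α⁻¹ := fun y' =>
      Real.div_rpow (hA y') hZ _
    simp only [h1]
    rw [← Finset.sum_div]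
    have hZα : Z ^ α⁻¹ ≠ 0 := (Real.rpow_pos_of_pos hZpos _).ne'
    rcases eq_or_ne (∑ y', A y' ^ α⁻¹) 0 with hS | hS
    · simp [hS]
    · field_simp

/-- Equality case of `holder_step` at the `α`-NML optimizer. -/
private lemma sum_eq {B : Type*} [Fintype B] {α : ℝ} (hα : 1 < α) (A : B → ℝ)
    (hA : ∀ y, 0 ≤ A y) :
    ∑ y, A y * (A y ^ α⁻¹ / ∑ y', A y' ^ α⁻¹) ^ (1 - α)
      = (∑ y, A y ^ α⁻¹) ^ α := by
  have hαne : α ≠ 0 := by linarith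
  set S := ∑ y', A y' ^ α⁻¹ with hSdef
  have hS0 : 0 ≤ S := Finset.sum_nonneg fun y _ => Real.rpow_nonneg (hA y) _
  have per : ∀ y, A y * (A y ^ α⁻¹ / S) ^ (1 - α) = A y ^ α⁻¹ * S ^ (α - 1) := by
    intro y
    rcases (hA y).eq_or_lt with h0 | h0
    · rw [← h0, Real.zero_rpow (inv_ne_zero hαne), zero_mul, zero_mul]
    · have hSpos : 0 < S := lt_of_lt_of_le (Real.rpow_pos_of_pos h0 _)
        (Finset.single_le_sum (fun y' _ => Real.rpow_nonneg (hA y') _) (Finset.mem_univ y))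
      have e1 : (A y ^ α⁻¹ / S) ^ (1 - α) = A y ^ (α⁻¹ * (1 - α)) / S ^ (1 - α) := by
        rw [Real.div_rpow (Real.rpow_nonneg (hA y) _) hS0, ← Real.rpow_mul (hA y)]
      have e2 : A y * A y ^ (α⁻¹ * (1 - α)) = A y ^ α⁻¹ := by
        rw [show A y * A y ^ (α⁻¹ * (1 - α)) = A y ^ (1:ℝ) * A y ^ (α⁻¹ * (1 - α)) by
            rw [Real.rpow_one],
          ← Real.rpow_add h0, show (1:ℝ) + α⁻¹ * (1 - α) = α⁻¹ by field_simp; ring]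
      have e3 : S ^ ((1:ℝ) - α) = (S ^ (α - 1))⁻¹ := by
        rw [show (1:ℝ) - α = -(α - 1) by ring, Real.rpow_neg hSpos.le]
      rw [e1, div_eq_mul_inv, ← mul_assoc, e2, e3, inv_inv]
  have hfinal : S ^ α = S * S ^ (α - 1) := by
    nth_rewrite 1 [show α = 1 + (α - 1) by ring]
    rw [Real.rpow_add' hS0 (by intro h; apply hαne; linarith), Real.rpow_one]
  rw [Finset.sum_congr rfl fun y _ => per y, ← Finset.sum_mul, ← hSdef, hfinal]

section Helpers

variable {Θ B : Type*} [MeasurableSpace Θ] [Fintype B] {α : ℝ} {p : Θ → B → ℝ} {n : ℕ}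
  {w : Measure Θ}

set_option linter.unusedSectionVars false

private lemma pmf_le_one (hp : ∀ θ, IsPMF (p θ)) (θ : Θ) (y : B) : p θ y ≤ 1 := by
  calc p θ y ≤ ∑ y', p θ y' :=
        Finset.single_le_sum (fun i _ => (hp θ).1 i) (Finset.mem_univ y)
    _ = 1 := (hp θ).2

private lemma prodP_nonneg (hp : ∀ θ, IsPMF (p θ)) (θ : Θ) (x : Fin n → B) :
    0 ≤ prodP p n θ x :=
  Finset.prod_nonneg fun i _ => (hp θ).1 _

private lemma prodP_le_one (hp : ∀ θ, IsPMF (p θ)) (θ : Θ) (x : Fin n → B) :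
    prodP p n θ x ≤ 1 :=
  Finset.prod_le_one (fun i _ => (hp θ).1 _) (fun i _ => pmf_le_one hp θ _)

private lemma prodP_measurable (hmeas : ∀ z : B, Measurable fun θ => p θ z) (x : Fin n → B) :
    Measurable fun θ => prodP p n θ x := by
  unfold prodP
  exact Finset.measurable_prod _ fun i _ => hmeas _

private lemma prodP_sum (hp : ∀ θ, IsPMF (p θ)) (θ : Θ) :
    ∑ x : Fin n → B, prodP p n θ x = 1 := by
  unfold prodP
  rw [← Fintype.piFinset_univ, Finset.sum_prod_piFinset]
  simp [(hp θ).2]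

private lemma prodP_integrable [IsProbabilityMeasure w] (hp : ∀ θ, IsPMF (p θ))
    (hmeas : ∀ z : B, Measurable fun θ => p θ z) (x : Fin n → B) :
    Integrable (fun θ => prodP p n θ x) w := by
  refine (integrable_const (1:ℝ)).mono' (prodP_measurable hmeas x).aestronglyMeasurable ?_
  refine Filter.Eventually.of_forall fun θ => ?_
  rw [Real.norm_eq_abs, abs_of_nonneg (prodP_nonneg hp θ x)]
  exact prodP_le_one hp θ x

private lemma base_integrable [IsProbabilityMeasure w] (hα : 0 ≤ α) (hp : ∀ θ, IsPMF (p θ))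
    (hmeas : ∀ z : B, Measurable fun θ => p θ z) (x : Fin n → B) (y : B) :
    Integrable (fun θ => prodP p n θ x * p θ y ^ α) w := by
  refine (integrable_const (1:ℝ)).mono'
    (((prodP_measurable hmeas x).mul ((hmeas y).pow measurable_const)).aestronglyMeasurable) ?_
  refine Filter.Eventually.of_forall fun θ => ?_
  rw [Real.norm_eq_abs, abs_of_nonneg (mul_nonneg (prodP_nonneg hp θ x)
    (Real.rpow_nonneg ((hp θ).1 y) α))]
  exact mul_le_one₀ (prodP_le_one hp θ x) (Real.rpow_nonneg ((hp θ).1 y) α)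
    (Real.rpow_le_one ((hp θ).1 y) (pmf_le_one hp θ y) hα)

/-- The fundamental rewriting of the conditional Rényi integrand. -/
private lemma swap_lemma [IsProbabilityMeasure w] (hα : 1 < α) (hp : ∀ θ, IsPMF (p θ))
    (hmeas : ∀ z : B, Measurable fun θ => p θ z)
    (phat : (Fin n → B) → B → ℝ) (hphat : ∀ x y, 0 ≤ phat x y) :
    (∫ θ, (∑ x : Fin n → B, prodP p n θ x *
        ∑ y : B, p θ y * (p θ y / phat x y) ^ (α - 1)) ∂w)
      = ∑ x : Fin n → B, ∑ y : B,
          (∫ θ, prodP p n θ x * p θ y ^ α ∂w) * phat x y ^ (1 - α) := by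
  have hα0 : (0:ℝ) ≤ α := by linarith
  have pt : ∀ θ, (∑ x : Fin n → B, prodP p n θ x *
      ∑ y : B, p θ y * (p θ y / phat x y) ^ (α - 1))
      = ∑ x : Fin n → B, ∑ y : B,
          prodP p n θ x * p θ y ^ α * phat x y ^ (1 - α) := by
    intro θ
    refine Finset.sum_congr rfl fun x _ => ?_
    rw [Finset.mul_sum]
    refine Finset.sum_congr rfl fun y _ => ?_
    rw [← mul_assoc, mul_assoc (prodP p n θ x), key_pt' hα ((hp θ).1 y) (hphat x y)]
    ring
  simp only [pt]
  rw [integral_finset_sum _ (fun x _ => integrable_finset_sum _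
    (fun y _ => (base_integrable hα0 hp hmeas x y).mul_const _))]
  refine Finset.sum_congr rfl fun x _ => ?_
  rw [integral_finset_sum _ (fun y _ => (base_integrable hα0 hp hmeas x y).mul_const _)]
  exact Finset.sum_congr rfl fun y _ => integral_mul_const _ _

/-- Positivity of the Sibson sum. -/
private lemma sib_pos [IsProbabilityMeasure w] [Nonempty B] (hα : 1 < α)
    (hp : ∀ θ, IsPMF (p θ)) (hmeas : ∀ z : B, Measurable fun θ => p θ z) :
    0 < ∑ x : Fin n → B, (∑ y : B, (∫ θ, prodP p n θ x * p θ y ^ α ∂w) ^ α⁻¹) ^ α := by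
  have hα0 : (0:ℝ) < α := by linarith
  set A : (Fin n → B) → B → ℝ := fun x y => ∫ θ, prodP p n θ x * p θ y ^ α ∂w with hAdef
  have hA0 : ∀ x y, 0 ≤ A x y := fun x y => integral_nonneg fun θ =>
    mul_nonneg (prodP_nonneg hp θ x) (Real.rpow_nonneg ((hp θ).1 y) _)
  have hcard : (0:ℝ) < (Fintype.card B : ℝ) := by exact_mod_cast Fintype.card_pos
  set κ : ℝ := ((Fintype.card B : ℝ))⁻¹ ^ α with hκdef
  have hκ : 0 < κ := Real.rpow_pos_of_pos (inv_pos.2 hcard) _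
  have hlow : ∀ θ, κ ≤ ∑ y, p θ y ^ α := by
    intro θ
    obtain ⟨y₀, -, hy₀⟩ : ∃ y ∈ Finset.univ, ((Fintype.card B : ℝ))⁻¹ ≤ p θ y := by
      apply Finset.exists_le_of_sum_le Finset.univ_nonempty
      rw [(hp θ).2, Finset.sum_const, Finset.card_univ, nsmul_eq_mul,
        mul_inv_cancel₀ hcard.ne']
    calc κ ≤ p θ y₀ ^ α := Real.rpow_le_rpow (inv_pos.2 hcard).le hy₀ hα0.le
      _ ≤ ∑ y, p θ y ^ α := Finset.single_le_sum
          (fun y _ => Real.rpow_nonneg ((hp θ).1 y) _) (Finset.mem_univ y₀)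
  have hgrand : κ ≤ ∑ x : Fin n → B, ∑ y : B, A x y := by
    have e2 : ∑ x : Fin n → B, ∑ y : B, A x y
        = ∫ θ, (∑ x : Fin n → B, ∑ y : B, prodP p n θ x * p θ y ^ α) ∂w := by
      rw [integral_finset_sum _ (fun x _ => integrable_finset_sum _
        (fun y _ => base_integrable hα0.le hp hmeas x y))]
      exact Finset.sum_congr rfl fun x _ =>
        (integral_finset_sum _ fun y _ => base_integrable hα0.le hp hmeas x y).symm
    rw [e2]
    have key : ∀ θ, κ ≤ ∑ x : Fin n → B, ∑ y : B, prodP p n θ x * p θ y ^ α := by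
      intro θ
      have hms : (∑ x : Fin n → B, ∑ y : B, prodP p n θ x * p θ y ^ α)
          = (∑ x : Fin n → B, prodP p n θ x) * ∑ y : B, p θ y ^ α := by
        rw [Finset.sum_mul_sum]
      rw [hms, prodP_sum hp θ, one_mul]
      exact hlow θ
    calc κ = ∫ _, κ ∂w := by simp
      _ ≤ _ := integral_mono (integrable_const κ)
          (integrable_finset_sum _ fun x _ => integrable_finset_sum _
            fun y _ => base_integrable hα0.le hp hmeas x y) key
  obtain ⟨x₀, y₀, hx0⟩ : ∃ x y, 0 < A x y := by
    by_contra h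
    push_neg at h
    have : ∑ x : Fin n → B, ∑ y : B, A x y ≤ 0 :=
      Finset.sum_nonpos fun x _ => Finset.sum_nonpos fun y _ => h x y
    linarith
  have hSx : 0 < ∑ y, A x₀ y ^ α⁻¹ := lt_of_lt_of_le (Real.rpow_pos_of_pos hx0 _)
    (Finset.single_le_sum (fun y _ => Real.rpow_nonneg (hA0 x₀ y) _) (Finset.mem_univ y₀))
  exact Finset.sum_pos' (fun x _ => Real.rpow_nonneg (Finset.sum_nonneg fun y _ =>
    Real.rpow_nonneg (hA0 x y) _) _) ⟨x₀, Finset.mem_univ _, Real.rpow_pos_of_pos hSx _⟩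

end Helpers

theorem conditional_sibson_closed_form
    {𝒳 Θ : Type*} [Fintype 𝒳] [Nonempty 𝒳] [MeasurableSpace Θ]
    (ℓ n : ℕ) (hℓ : 0 < ℓ) (hn : 0 < n) (α : ℝ) (hα : 1 < α)
    (p : Θ → (Fin ℓ → 𝒳) → ℝ)
    (hp : ∀ θ, IsPMF (p θ))
    (hmeas : ∀ z : Fin ℓ → 𝒳, Measurable fun θ => p θ z)
    (w : Measure Θ) [IsProbabilityMeasure w] :
    (∀ phat : (Fin n → Fin ℓ → 𝒳) → (Fin ℓ → 𝒳) → ℝ,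
        (∀ x, IsPMF (phat x)) → (∀ x y, 0 < phat x y) →
        sibsonMI α p n w ≤ condRenyiDiv α p n w phat)
    ∧ condRenyiDiv α p n w (alphaNML α p n w) = sibsonMI α p n w := by
  have hα0 : (0:ℝ) < α := by linarith
  have hA0 : ∀ (x : Fin n → Fin ℓ → 𝒳) (y : Fin ℓ → 𝒳),
      (0:ℝ) ≤ ∫ θ, prodP p n θ x * p θ y ^ α ∂w := fun x y =>
    integral_nonneg fun θ => mul_nonneg (prodP_nonneg hp θ x)
      (Real.rpow_nonneg ((hp θ).1 y) _)
  have hpos := sib_pos (n := n) (w := w) hα hp hmeas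
  constructor
  · intro phat hpmf hppos
    unfold sibsonMI condRenyiDiv
    rw [swap_lemma hα hp hmeas phat (fun x y => (hppos x y).le)]
    refine mul_le_mul_of_nonneg_left ?_ (inv_nonneg.2 (by linarith))
    refine Real.log_le_log hpos ?_
    refine Finset.sum_le_sum fun x _ => ?_
    exact holder_step hα (fun y => ∫ θ, prodP p n θ x * p θ y ^ α ∂w) (phat x)
      (hA0 x) (fun y => hppos x y) (hpmf x).2
  · unfold sibsonMI condRenyiDiv
    have hNML0 : ∀ x y, 0 ≤ alphaNML α p n w x y := by
      intro x y
      unfold alphaNML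
      refine div_nonneg (Real.rpow_nonneg ?_ _) (Finset.sum_nonneg fun y' _ =>
        Real.rpow_nonneg ?_ _)
      all_goals exact div_nonneg (integral_nonneg fun θ => mul_nonneg (prodP_nonneg hp θ x)
        (Real.rpow_nonneg ((hp θ).1 _) _)) (integral_nonneg fun θ => prodP_nonneg hp θ x)
    rw [swap_lemma hα hp hmeas _ hNML0]
    have hsum : (∑ x : Fin n → Fin ℓ → 𝒳, ∑ y : Fin ℓ → 𝒳,
        (∫ θ, prodP p n θ x * p θ y ^ α ∂w) * alphaNML α p n w x y ^ (1 - α))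
        = ∑ x : Fin n → Fin ℓ → 𝒳,
            (∑ y : Fin ℓ → 𝒳, (∫ θ, prodP p n θ x * p θ y ^ α ∂w) ^ α⁻¹) ^ α := by
      refine Finset.sum_congr rfl fun x _ => ?_
      have hZ0 : (0:ℝ) ≤ ∫ θ, prodP p n θ x ∂w :=
        integral_nonneg fun θ => prodP_nonneg hp θ x
      have hAZ : (∫ θ, prodP p n θ x ∂w) = 0 →
          ∀ y, (∫ θ, prodP p n θ x * p θ y ^ α ∂w) = 0 := by
        intro hZ y
        have hle : (∫ θ, prodP p n θ x * p θ y ^ α ∂w) ≤ ∫ θ, prodP p n θ x ∂w :=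
          integral_mono (base_integrable hα0.le hp hmeas x y)
            (prodP_integrable hp hmeas x) (fun θ => by
              calc prodP p n θ x * p θ y ^ α ≤ prodP p n θ x * 1 :=
                    mul_le_mul_of_nonneg_left
                      (Real.rpow_le_one ((hp θ).1 y) (pmf_le_one hp θ y) hα0.le)
                      (prodP_nonneg hp θ x)
                _ = prodP p n θ x := mul_one _)
        have h1 := hA0 x y
        rw [hZ] at hle
        linarith
      have hNeq : ∀ y, alphaNML α p n w x y
          = (∫ θ, prodP p n θ x * p θ y ^ α ∂w) ^ α⁻¹
            / ∑ y', (∫ θ, prodP p n θ x * p θ y' ^ α ∂w) ^ α⁻¹ := by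
        intro y
        have h := ratio_eq hα (fun y => ∫ θ, prodP p n θ x * p θ y ^ α ∂w) (hA0 x)
          (∫ θ, prodP p n θ x ∂w) hZ0 hAZ y
        simpa [alphaNML, posteriorInt] using h
      rw [Finset.sum_congr rfl (fun y _ => by rw [hNeq y])]
      exact sum_eq hα (fun y => ∫ θ, prodP p n θ x * p θ y ^ α ∂w) (hA0 x)
    rw [hsum]
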